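/- arXiv:2307.15350 — 3 statements merged into one kernel-verified Lean document; each statement's English description precedes it below -/
import Mathlib

section
/- Let d, m ∈ ℕ and let p_0, …, p_m : ℝ^d → ℝ be polynomial functions. For θ ∈ ℝ^d define the univariate polynomial P_θ(λ) = Σ_{u=0}^m p_u(θ) λ^u. Suppose there exists θ₀ ∈ ℝ^d such that p_m(θ₀) ≠ 0 and every complex root of P_{θ₀} is simple. Then the set {θ ∈ ℝ^d : p_m(θ) ≠ 0 and P_θ has a repeated complex root} has Lebesgue measure zero in ℝ^d. -/
open Finset MeasureTheory MvPolynomial Matrix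

lemma continuous_mveval {n : ℕ} (q : MvPolynomial (Fin n) ℝ) :
    Continuous fun θ : Fin n → ℝ => MvPolynomial.eval θ q := by
  induction q using MvPolynomial.induction_on with
  | C a => simpa using continuous_const
  | add p q hp hq => simp only [map_add]; exact hp.add hq
  | mul_X p i hp => simp only [_root_.map_mul, MvPolynomial.eval_X]; exact hp.mul (continuous_apply i)

lemma mv_zero_set_null : ∀ (n : ℕ) (q : MvPolynomial (Fin n) ℝ), q ≠ 0 →
    volume {θ : Fin n → ℝ | MvPolynomial.eval θ q = 0} = 0 := by
  intro n
  induction n with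
  | zero =>
    intro q hq
    have h : {θ : Fin 0 → ℝ | MvPolynomial.eval θ q = 0} = ∅ := by
      ext θ
      simp only [Set.mem_setOf_eq, Set.mem_empty_iff_false, iff_false]
      have h2 : (MvPolynomial.isEmptyAlgEquiv ℝ (Fin 0)) q ≠ 0 := by
        simp only [ne_eq, EmbeddingLike.map_eq_zero_iff]; exact hq
      have h3 : θ = (fun a => IsEmpty.elim inferInstance a) := by
        funext a; exact absurd a.2 (Nat.not_lt_zero _)
      rw [h3]
      have hinj := (MvPolynomial.aeval_injective_iff_of_isEmpty (R := ℝ) (S₁ := ℝ)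
        (f := fun a : Fin 0 => IsEmpty.elim inferInstance a)).2 (algebraMap ℝ ℝ).injective
      intro h0; apply hq; apply hinj; rw [map_zero]
      simpa [MvPolynomial.coe_aeval_eq_eval] using h0
    rw [h]; exact measure_empty
  | succ n ih =>
    intro q hq
    set q' : Polynomial (MvPolynomial (Fin n) ℝ) := MvPolynomial.finSuccEquiv ℝ n q with hq'
    have hq'0 : q' ≠ 0 := by
      simp only [hq', ne_eq, EmbeddingLike.map_eq_zero_iff]; exact hq
    set c : MvPolynomial (Fin n) ℝ := q'.leadingCoeff with hc
    have hc0 : c ≠ 0 := Polynomial.leadingCoeff_ne_zero.2 hq'0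
    set e := MeasurableEquiv.piFinSuccAbove (fun _ : Fin (n+1) => ℝ) 0 with he
    have hep : MeasurePreserving e.symm volume volume :=
      (volume_preserving_piFinSuccAbove (fun _ : Fin (n+1) => ℝ) 0).symm e
    set S : Set (Fin (n+1) → ℝ) := {θ | MvPolynomial.eval θ q = 0} with hS
    have hkey : ∀ (a : ℝ) (y : Fin n → ℝ), (e.symm (a, y) : Fin (n+1) → ℝ) = Fin.cons a y := by
      intro a y
      simp [he, MeasurableEquiv.piFinSuccAbove, Fin.insertNthEquiv, Fin.insertNth_zero]
    have hSmeas : MeasurableSet S := by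
      have : S = (fun θ : Fin (n+1) → ℝ => MvPolynomial.eval θ q) ⁻¹' {0} := rfl
      rw [this]
      exact (continuous_mveval q).measurable (measurableSet_singleton 0)
    have h1 : volume S = volume (e.symm ⁻¹' S) := (hep.measure_preimage hSmeas.nullMeasurableSet).symm
    set W : Set (ℝ × (Fin n → ℝ)) := e.symm ⁻¹' S with hW
    have hWmeas : MeasurableSet W := e.symm.measurable hSmeas
    have hpre : ∀ p : ℝ × (Fin n → ℝ),
        p ∈ W ↔ Polynomial.eval p.1 (q'.map (MvPolynomial.eval p.2)) = 0 := by
      rintro ⟨a, y⟩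
      simp only [hW, Set.mem_preimage, hS, Set.mem_setOf_eq]
      rw [hkey a y, MvPolynomial.eval_eq_eval_mv_eval']
    rw [h1]
    set Z : Set (Fin n → ℝ) := {y | MvPolynomial.eval y c = 0} with hZ
    have hZmeas : MeasurableSet Z := by
      have : Z = (fun y : Fin n → ℝ => MvPolynomial.eval y c) ⁻¹' {0} := rfl
      rw [this]
      exact (continuous_mveval c).measurable (measurableSet_singleton 0)
    have hZ0 : volume Z = 0 := ih c hc0
    set T : Set (ℝ × (Fin n → ℝ)) := W ∩ (Set.univ ×ˢ Zᶜ) with hT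
    have hsub : W ⊆ (Set.univ ×ˢ Z) ∪ T := by
      intro p hp
      by_cases h : p.2 ∈ Z
      · exact Or.inl ⟨Set.mem_univ _, h⟩
      · exact Or.inr ⟨hp, Set.mem_univ _, h⟩
    refine measure_mono_null hsub (measure_union_null ?_ ?_)
    · rw [Measure.volume_eq_prod, Measure.prod_prod, hZ0, mul_zero]
    · -- T has null slices over the second coordinate
      have hTmeas : MeasurableSet T := hWmeas.inter (MeasurableSet.univ.prod hZmeas.compl)
      have hswap : (volume : Measure (ℝ × (Fin n → ℝ))) T
          = (volume : Measure ((Fin n → ℝ) × ℝ)) (Prod.swap ⁻¹' T) := by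
        rw [Measure.volume_eq_prod, Measure.volume_eq_prod, ← Measure.prod_swap,
          Measure.map_apply measurable_swap hTmeas]
      rw [hswap]
      rw [Measure.volume_eq_prod, Measure.measure_prod_null (measurable_swap hTmeas)]
      refine Filter.Eventually.of_forall fun y => ?_
      by_cases hy : y ∈ Z
      · have : (Prod.mk y ⁻¹' (Prod.swap ⁻¹' T)) = ∅ := by
          ext a
          simp only [Set.mem_preimage, Prod.swap_prod_mk, hT, Set.mem_inter_iff,
            Set.mem_prod, Set.mem_univ, Set.mem_compl_iff, true_and,
            Set.mem_empty_iff_false, iff_false, not_and]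
          intro _; simp only [not_not]; exact hy
        simp [this]
      · have hr : q'.map (MvPolynomial.eval y) ≠ 0 := by
          intro h0
          apply hy
          have : (q'.map (MvPolynomial.eval y)).coeff q'.natDegree = 0 := by rw [h0]; simp
          rw [Polynomial.coeff_map] at this
          exact this
        have hfin : (Prod.mk y ⁻¹' (Prod.swap ⁻¹' T)).Finite := by
          refine Set.Finite.subset (Polynomial.finite_setOf_isRoot hr) ?_
          intro a ha
          have h2 := ha.1
          rw [show (y, a).swap = (a, y) from rfl, hpre (a, y)] at h2
          exact h2
        exact hfin.measure_zero _


noncomputable def sylQ {R : Type*} [CommRing R] (k : ℕ) (f : Polynomial R) (r : Fin (2*k+1)) :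
    Polynomial R :=
  if (r : ℕ) < k then f * Polynomial.X ^ (r : ℕ)
  else Polynomial.derivative f * Polynomial.X ^ ((r : ℕ) - k)

noncomputable def sylM {R : Type*} [CommRing R] (k : ℕ) (f : Polynomial R) :
    Matrix (Fin (2*k+1)) (Fin (2*k+1)) R :=
  Matrix.of fun r l => (sylQ k f r).coeff l

lemma sylM_map {R S : Type*} [CommRing R] [CommRing S] (φ : R →+* S) (k : ℕ)
    (f : Polynomial R) : sylM k (f.map φ) = (sylM k f).map φ := by
  ext r l
  simp only [sylM, sylQ, Matrix.map_apply, Matrix.of_apply]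
  split
  · simp [← Polynomial.coeff_map]
  · simp [← Polynomial.coeff_map, Polynomial.derivative_map]

lemma sylQ_natDegree_le {R : Type*} [CommRing R] (k : ℕ) (f : Polynomial R)
    (hdeg : f.natDegree ≤ k + 1) (r : Fin (2*k+1)) : (sylQ k f r).natDegree ≤ 2*k := by
  have hr := r.isLt
  unfold sylQ
  by_cases h : (r : ℕ) < k
  · rw [if_pos h]
    refine le_trans (Polynomial.natDegree_mul_le) ?_
    have := Polynomial.natDegree_X_pow_le (R := R) (r : ℕ)
    omega
  · rw [if_neg h]
    refine le_trans (Polynomial.natDegree_mul_le) ?_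
    have h1 := Polynomial.natDegree_derivative_le f
    have := Polynomial.natDegree_X_pow_le (R := R) ((r : ℕ) - k)
    omega

lemma sylM_det_eq_zero (k : ℕ) (f : Polynomial ℂ) (hdeg : f.natDegree ≤ k + 1)
    (z : ℂ) (hz : f.eval z = 0) (hz' : (Polynomial.derivative f).eval z = 0) :
    (sylM k f).det = 0 := by
  rw [← Matrix.exists_mulVec_eq_zero_iff]
  refine ⟨fun l => z ^ (l : ℕ), ?_, ?_⟩
  · intro h0
    have := congrFun h0 ⟨0, by omega⟩
    simp at this
  · funext r
    have hq : (sylQ k f r).natDegree < 2*k+1 := Nat.lt_succ_of_le (sylQ_natDegree_le k f hdeg r)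
    have heval : (sylM k f).mulVec (fun l => z ^ (l : ℕ)) r = (sylQ k f r).eval z := by
      rw [Polynomial.eval_eq_sum_range' hq]
      rw [Matrix.mulVec, dotProduct]
      rw [← Fin.sum_univ_eq_sum_range (fun i => (sylQ k f r).coeff i * z ^ i)]
      rfl
    rw [heval]
    unfold sylQ
    split
    · simp [hz]
    · simp [hz']

lemma sylM_det_ne_zero (k : ℕ) (f : Polynomial ℂ) (hdeg : f.natDegree ≤ k + 1)
    (hlc : f.coeff (k+1) ≠ 0) (hcop : IsCoprime f (Polynomial.derivative f)) :
    (sylM k f).det ≠ 0 := by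
  have hf0 : f ≠ 0 := fun h => hlc (by simp [h])
  have hnd : f.natDegree = k + 1 :=
    le_antisymm hdeg (Polynomial.le_natDegree_of_ne_zero hlc)
  rw [← Matrix.det_transpose, Ne, ← Matrix.exists_mulVec_eq_zero_iff]
  rintro ⟨v, hv0, hv⟩
  apply hv0
  set A : Polynomial ℂ :=
    ∑ r : Fin (2*k+1), if (r : ℕ) < k then Polynomial.C (v r) * Polynomial.X ^ (r : ℕ) else 0
    with hA
  set B : Polynomial ℂ :=
    ∑ r : Fin (2*k+1), if (r : ℕ) < k then 0 else Polynomial.C (v r) * Polynomial.X ^ ((r : ℕ) - k)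
    with hB
  set S : Polynomial ℂ := ∑ r : Fin (2*k+1), Polynomial.C (v r) * sylQ k f r with hSdef
  have hS_eq : S = f * A + Polynomial.derivative f * B := by
    rw [hA, hB, hSdef, Finset.mul_sum, Finset.mul_sum, ← Finset.sum_add_distrib]
    refine Finset.sum_congr rfl fun r _ => ?_
    unfold sylQ
    split <;> simp <;> ring
  have hSdeg : S.natDegree ≤ 2*k := by
    refine le_trans (Polynomial.natDegree_sum_le _ _) ?_
    rw [Finset.fold_max_le]
    refine ⟨by omega, fun r _ => ?_⟩
    exact le_trans (Polynomial.natDegree_C_mul_le _ _) (sylQ_natDegree_le k f hdeg r)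
  have hS0 : S = 0 := by
    ext i
    rw [Polynomial.coeff_zero]
    by_cases hi : i < 2*k+1
    · have h2 := congrFun hv ⟨i, hi⟩
      rw [hSdef, Polynomial.finset_sum_coeff]
      simp only [Matrix.mulVec, dotProduct, Matrix.transpose_apply, sylM, Matrix.of_apply,
        Pi.zero_apply] at h2
      rw [← h2]
      refine Finset.sum_congr rfl fun r _ => ?_
      rw [Polynomial.coeff_C_mul]
      ring
    · exact Polynomial.coeff_eq_zero_of_natDegree_lt (by omega)
  rw [hS0] at hS_eq
  have hBnat : B.natDegree ≤ k := by
    refine le_trans (Polynomial.natDegree_sum_le _ _) ?_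
    rw [Finset.fold_max_le]
    refine ⟨by omega, fun r _ => ?_⟩
    have hr := r.isLt
    simp only [Function.comp_apply]
    split
    · simp
    · refine le_trans (Polynomial.natDegree_C_mul_le _ _) ?_
      refine le_trans (Polynomial.natDegree_X_pow_le _) (by omega)
  have hBdeg : B.degree < f.degree := by
    have hfd : f.degree = ((k+1 : ℕ) : WithBot ℕ) := by
      rw [Polynomial.degree_eq_natDegree hf0, hnd]
    rw [hfd]
    refine lt_of_le_of_lt Polynomial.degree_le_natDegree ?_
    exact_mod_cast Nat.lt_succ_of_le hBnat
  have hB0 : B = 0 := by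
    have hdvd : f ∣ Polynomial.derivative f * B := ⟨-A, by linear_combination -hS_eq⟩
    have : f ∣ B := hcop.dvd_of_dvd_mul_left hdvd
    exact Polynomial.eq_zero_of_dvd_of_degree_lt this hBdeg
  have hA0 : A = 0 := by
    rw [hB0, mul_zero, add_zero] at hS_eq
    rcases mul_eq_zero.1 hS_eq.symm with h | h
    · exact absurd h hf0
    · exact h
  funext r
  show v r = 0
  by_cases hr : (r : ℕ) < k
  · have hcoeff := congrArg (fun p => Polynomial.coeff p (r : ℕ)) hA0
    simp only [hA, Polynomial.finset_sum_coeff, Polynomial.coeff_zero] at hcoeff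
    have hsum : (∑ b : Fin (2*k+1),
        (if (b : ℕ) < k then Polynomial.C (v b) * Polynomial.X ^ (b : ℕ) else 0).coeff (r : ℕ))
        = v r := by
      rw [Finset.sum_eq_single r]
      · simp [hr, Polynomial.coeff_C_mul, Polynomial.coeff_X_pow]
      · intro r' _ hne
        split
        · rw [Polynomial.coeff_C_mul, Polynomial.coeff_X_pow]
          have : (r : ℕ) ≠ (r' : ℕ) := fun h => hne (Fin.ext h.symm)
          simp [this]
        · simp
      · simp
    rw [← hsum]
    exact hcoeff
  · have hcoeff := congrArg (fun p => Polynomial.coeff p ((r : ℕ) - k)) hB0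
    simp only [hB, Polynomial.finset_sum_coeff, Polynomial.coeff_zero] at hcoeff
    have hsum : (∑ b : Fin (2*k+1),
        (if (b : ℕ) < k then 0
          else Polynomial.C (v b) * Polynomial.X ^ ((b : ℕ) - k)).coeff ((r : ℕ) - k))
        = v r := by
      rw [Finset.sum_eq_single r]
      · simp [hr, Polynomial.coeff_C_mul, Polynomial.coeff_X_pow]
      · intro r' _ hne
        split
        · simp
        · rw [Polynomial.coeff_C_mul, Polynomial.coeff_X_pow]
          have hr' := r'.isLt
          have hrr := r.isLt
          have hd : (r : ℕ) - k ≠ (r' : ℕ) - k := by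
            intro h
            rename_i hnotlt
            exact hne (Fin.ext (by omega))
          simp [hd]
      · simp
    rw [← hsum]
    exact hcoeff

lemma coeff_sum_C_mul_X_pow {R : Type*} [CommRing R] (a : ℕ → R) (N t : ℕ) :
    (∑ u ∈ range N, Polynomial.C (a u) * Polynomial.X ^ u).coeff t
      = if t < N then a t else 0 := by
  rw [Polynomial.finset_sum_coeff]
  simp only [Polynomial.coeff_C_mul, Polynomial.coeff_X_pow]
  by_cases h : t < N
  · rw [if_pos h, Finset.sum_eq_single_of_mem t (Finset.mem_range.2 h)]
    · simp
    · intro u _ hne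
      simp [Ne.symm hne]
  · rw [if_neg h, Finset.sum_eq_zero]
    intro u hu
    have hut : t ≠ u := by
      have := Finset.mem_range.1 hu
      omega
    simp [hut]

lemma natDegree_sum_C_mul_X_pow_le {R : Type*} [CommRing R] (a : ℕ → R) (N : ℕ) :
    (∑ u ∈ range (N+1), Polynomial.C (a u) * Polynomial.X ^ u).natDegree ≤ N := by
  refine le_trans (Polynomial.natDegree_sum_le _ _) ?_
  rw [Finset.fold_max_le]
  refine ⟨by omega, fun u hu => ?_⟩
  simp only [Function.comp_apply]
  refine le_trans (Polynomial.natDegree_C_mul_le _ _) ?_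
  refine le_trans (Polynomial.natDegree_X_pow_le _) ?_
  simpa using Nat.lt_succ_iff.1 (Finset.mem_range.1 hu)

lemma eval_sum_eq (c : ℕ → ℂ) (N : ℕ) (z : ℂ) :
    (∑ u ∈ range N, c u * z ^ u)
      = Polynomial.eval z (∑ u ∈ range N, Polynomial.C (c u) * Polynomial.X ^ u) := by
  rw [Polynomial.eval_finset_sum]
  simp

lemma deriv_sum_eq (c : ℕ → ℂ) (N : ℕ) (z : ℂ) :
    deriv (fun w : ℂ => ∑ u ∈ range N, c u * w ^ u) z
      = Polynomial.eval z (Polynomial.derivative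
          (∑ u ∈ range N, Polynomial.C (c u) * Polynomial.X ^ u)) := by
  have : (fun w : ℂ => ∑ u ∈ range N, c u * w ^ u)
      = fun w => Polynomial.eval w (∑ u ∈ range N, Polynomial.C (c u) * Polynomial.X ^ u) := by
    funext w
    exact eval_sum_eq c N w
  rw [this, Polynomial.deriv]

/-- Let `p 0, …, p m : ℝ^d → ℝ` be polynomial functions and for
`θ ∈ ℝ^d` set `P_θ(λ) = Σ_{u=0}^m p u (θ) * λ^u`.  If for some `θ₀` the leading
coefficient `p m (θ₀)` is nonzero and every complex root of `P_{θ₀}` is simple, then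
the set of `θ` with `p m (θ) ≠ 0` for which `P_θ` has a repeated complex root has
Lebesgue measure zero. -/
theorem stmt4 (d m : ℕ) (p : ℕ → MvPolynomial (Fin d) ℝ)
    (θ₀ : Fin d → ℝ) (h₀ : eval θ₀ (p m) ≠ 0)
    (hsimple : ∀ z : ℂ,
      (∑ u ∈ range (m + 1), (eval θ₀ (p u) : ℂ) * z ^ u = 0) →
      deriv (fun w : ℂ => ∑ u ∈ range (m + 1), (eval θ₀ (p u) : ℂ) * w ^ u) z ≠ 0) :
    volume {θ : Fin d → ℝ | eval θ (p m) ≠ 0 ∧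
      ∃ z : ℂ, (∑ u ∈ range (m + 1), (eval θ (p u) : ℂ) * z ^ u = 0) ∧
        deriv (fun w : ℂ => ∑ u ∈ range (m + 1), (eval θ (p u) : ℂ) * w ^ u) z = 0}
      = 0 := by
  classical
  obtain hm | ⟨k, rfl⟩ : m = 0 ∨ ∃ k, m = k + 1 := by
    rcases m with _ | k
    · exact Or.inl rfl
    · exact Or.inr ⟨k, rfl⟩
  · subst hm
    have hempty : {θ : Fin d → ℝ | eval θ (p 0) ≠ 0 ∧
        ∃ z : ℂ, (∑ u ∈ range (0 + 1), (eval θ (p u) : ℂ) * z ^ u = 0) ∧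
          deriv (fun w : ℂ => ∑ u ∈ range (0 + 1), (eval θ (p u) : ℂ) * w ^ u) z = 0} = ∅ := by
      ext θ
      simp only [Set.mem_setOf_eq, Set.mem_empty_iff_false, iff_false, not_and]
      rintro h1 ⟨z, hz, -⟩
      simp only [zero_add, range_one, sum_singleton, pow_zero, mul_one, Complex.ofReal_eq_zero] at hz
      exact h1 hz
    rw [hempty, measure_empty]
  · set φ : (Fin d → ℝ) → MvPolynomial (Fin d) ℝ →+* ℂ :=
      fun θ => Complex.ofRealHom.comp (MvPolynomial.eval θ) with hφ
    set P : Polynomial (MvPolynomial (Fin d) ℝ) :=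
      ∑ u ∈ range (k+1+1), Polynomial.C (p u) * Polynomial.X ^ u with hP
    have hmap : ∀ θ : Fin d → ℝ, P.map (φ θ) = ∑ u ∈ range (k+1+1),
        Polynomial.C ((MvPolynomial.eval θ (p u) : ℝ) : ℂ) * Polynomial.X ^ u := by
      intro θ
      rw [hP, Polynomial.map_sum]
      refine Finset.sum_congr rfl fun u _ => ?_
      simp [hφ]
    set f : (Fin d → ℝ) → Polynomial ℂ := fun θ => P.map (φ θ) with hf
    have hfdeg : ∀ θ, (f θ).natDegree ≤ k+1 := by
      intro θ
      simp only [hf]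
      rw [hmap θ]
      exact natDegree_sum_C_mul_X_pow_le _ _
    have hfcoeff : ∀ (θ : Fin d → ℝ),
        (f θ).coeff (k+1) = ((MvPolynomial.eval θ (p (k+1)) : ℝ) : ℂ) := by
      intro θ
      simp only [hf]
      rw [hmap θ, coeff_sum_C_mul_X_pow]
      simp
    have heval : ∀ (θ : Fin d → ℝ) (z : ℂ),
        (∑ u ∈ range (k+1+1), (MvPolynomial.eval θ (p u) : ℂ) * z ^ u) = (f θ).eval z := by
      intro θ z
      simp only [hf]
      rw [hmap θ]
      exact eval_sum_eq _ _ z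
    have hderiv : ∀ (θ : Fin d → ℝ) (z : ℂ),
        deriv (fun w : ℂ => ∑ u ∈ range (k+1+1), (MvPolynomial.eval θ (p u) : ℂ) * w ^ u) z
          = (Polynomial.derivative (f θ)).eval z := by
      intro θ z
      simp only [hf]
      rw [deriv_sum_eq, hmap θ]
    set D : MvPolynomial (Fin d) ℝ := (sylM k P).det with hD
    have hDmap : ∀ θ : Fin d → ℝ, ((MvPolynomial.eval θ D : ℝ) : ℂ) = (sylM k (f θ)).det := by
      intro θ
      simp only [hf]
      rw [sylM_map (φ θ) k P, ← RingHom.mapMatrix_apply, ← RingHom.map_det]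
      rfl
    have hf0ne : (f θ₀).coeff (k+1) ≠ 0 := by
      rw [hfcoeff θ₀]
      exact_mod_cast h₀
    have hfne : f θ₀ ≠ 0 := fun h => hf0ne (by rw [h]; simp)
    have hcop : IsCoprime (f θ₀) (Polynomial.derivative (f θ₀)) := by
      rw [← EuclideanDomain.gcd_isUnit_iff]
      by_contra hunit
      set g := EuclideanDomain.gcd (f θ₀) (Polynomial.derivative (f θ₀)) with hg
      have hg0 : g ≠ 0 := by
        intro h0
        rw [hg, EuclideanDomain.gcd_eq_zero_iff] at h0
        exact hfne h0.1
      have hdne : g.degree ≠ 0 := fun h => hunit (Polynomial.isUnit_iff_degree_eq_zero.2 h)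
      obtain ⟨z, hzroot⟩ := Complex.isAlgClosed.exists_root g hdne
      have h1 : (f θ₀).IsRoot z := hzroot.dvd (EuclideanDomain.gcd_dvd_left _ _)
      have h2 : (Polynomial.derivative (f θ₀)).IsRoot z :=
        hzroot.dvd (EuclideanDomain.gcd_dvd_right _ _)
      exact hsimple z (by rw [heval θ₀ z]; exact h1) (by rw [hderiv θ₀ z]; exact h2)
    have hD₀ : MvPolynomial.eval θ₀ D ≠ 0 := by
      intro h0
      have hmm := hDmap θ₀
      rw [h0] at hmm
      exact sylM_det_ne_zero k (f θ₀) (hfdeg θ₀) hf0ne hcop (by simpa using hmm.symm)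
    have hDne : D ≠ 0 := fun h => hD₀ (by rw [h]; simp)
    refine measure_mono_null ?_ (mv_zero_set_null d D hDne)
    rintro θ ⟨hθ, z, hz1, hz2⟩
    show MvPolynomial.eval θ D = 0
    have h1 : (f θ).eval z = 0 := by rw [← heval θ z]; exact hz1
    have h2 : (Polynomial.derivative (f θ)).eval z = 0 := by rw [← hderiv θ z]; exact hz2
    have hdet := sylM_det_eq_zero k (f θ) (hfdeg θ) z h1 h2
    have hmm := hDmap θ
    rw [hdet] at hmm
    exact_mod_cast hmm
end

section
/- Fix p ≥ 2. For Lebesgue-almost every pair (A, B) of real p×p matrices, for every λ ∈ ℝ with det(A − λ(A − B)) = 0, all the leading principal minors of orders 1, 2, …, p − 1 of the matrix M = A − λ(A − B) are nonzero (equivalently, Gaussian elimination on M can be carried out through the first p − 1 pivots without any row or column permutation). -/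
open MeasureTheory Matrix Polynomial

namespace Stmt8

/-! ### Algebraic part: a Sylvester-style resultant matrix -/

variable {R S : Type*} [CommRing R] [CommRing S]

/-- `qdet n M N` is `det (M + t • N)` as a polynomial in `t`. -/
noncomputable def qdet (n : ℕ) (M N : Matrix (Fin n) (Fin n) R) : Polynomial R :=
  Matrix.det ((X : R[X]) • N.map C + M.map C)

theorem natDegree_qdet_le (n : ℕ) (M N : Matrix (Fin n) (Fin n) R) :
    (qdet n M N).natDegree ≤ n := by
  simpa [qdet] using Polynomial.natDegree_det_X_add_C_le N M

theorem qdet_map (n : ℕ) (M N : Matrix (Fin n) (Fin n) R) (φ : R →+* S) :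
    (qdet n M N).map φ = qdet n (M.map φ) (N.map φ) := by
  show Polynomial.mapRingHom φ (qdet n M N) = _
  rw [qdet, RingHom.map_det, qdet]
  congr 1
  ext i j
  simp [Matrix.map_apply, smul_eq_mul]

theorem eval_qdet (n : ℕ) (M N : Matrix (Fin n) (Fin n) R) (t : R) :
    (qdet n M N).eval t = Matrix.det (Matrix.of fun i j => M i j + t * N i j) := by
  show Polynomial.evalRingHom t (qdet n M N) = _
  rw [qdet, RingHom.map_det]
  congr 1
  ext i j
  simp only [RingHom.mapMatrix_apply, Matrix.map_apply, Matrix.add_apply, Matrix.smul_apply,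
    smul_eq_mul, coe_evalRingHom, Polynomial.eval_add, Polynomial.eval_mul, Polynomial.eval_X,
    Polynomial.eval_C, Matrix.of_apply]
  ring

/-- the exponent associated to a column of the Sylvester matrix. -/
def expc (p v : ℕ) : Fin v ⊕ Fin p → ℕ := Sum.elim (fun i => (i : ℕ)) (fun j => v + (j : ℕ))

/-- Sylvester-style matrix of two polynomials, of formal degrees `p` and `v`. -/
noncomputable def syl (p v : ℕ) (f g : Polynomial R) :
    Matrix (Fin v ⊕ Fin p) (Fin v ⊕ Fin p) R := fun r c =>
  Sum.elim
    (fun (i : Fin v) => if (i : ℕ) ≤ expc p v c then f.coeff (expc p v c - i) else 0)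
    (fun (j : Fin p) => if (j : ℕ) ≤ expc p v c then g.coeff (expc p v c - j) else 0) r

theorem syl_map (p v : ℕ) (f g : Polynomial R) (φ : R →+* S) :
    (syl p v f g).map φ = syl p v (f.map φ) (g.map φ) := by
  ext r c
  rcases r with i | j <;>
    simp [syl, Matrix.map_apply, apply_ite φ, Polynomial.coeff_map]

theorem shifted_sum (f : ℝ[X]) (i N : ℕ) (h : f.natDegree + i < N) (t : ℝ) :
    ∑ e ∈ Finset.range N, (if i ≤ e then f.coeff (e - i) else 0) * t ^ e
      = t ^ i * f.eval t := by
  have hsub : Finset.Ico i N ⊆ Finset.range N := by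
    intro e he
    simp only [Finset.mem_Ico] at he
    simpa using he.2
  rw [← Finset.sum_subset hsub ?van]
  case van =>
    intro e he hne
    simp only [Finset.mem_range] at he
    simp only [Finset.mem_Ico, not_and] at hne
    rw [if_neg (fun hle => absurd he (by simpa using hne hle)), zero_mul]
  rw [Finset.sum_Ico_eq_sum_range]
  rw [Polynomial.eval_eq_sum_range' (n := N - i) (by omega), Finset.mul_sum]
  refine Finset.sum_congr rfl fun k _ => ?_
  rw [if_pos (Nat.le_add_right i k), Nat.add_sub_cancel_left, pow_add]
  ring

theorem det_syl_eq_zero {p v : ℕ} (hv : 1 ≤ v) {f g : ℝ[X]}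
    (hf : f.natDegree ≤ p) (hg : g.natDegree ≤ v) {t : ℝ}
    (h1 : f.eval t = 0) (h2 : g.eval t = 0) :
    (syl p v f g).det = 0 := by
  rw [← Matrix.exists_mulVec_eq_zero_iff]
  refine ⟨fun c => t ^ expc p v c, ?_, ?_⟩
  · intro hcon
    have := congrFun hcon (Sum.inl ⟨0, hv⟩)
    simp [expc] at this
  · funext r
    have key : ∀ (q : ℝ[X]) (off : ℕ), q.natDegree + off < v + p →
        (∑ c : Fin v ⊕ Fin p,
            (if off ≤ expc p v c then q.coeff (expc p v c - off) else 0) * t ^ expc p v c)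
          = t ^ off * q.eval t := by
      intro q off hoff
      rw [Fintype.sum_sum_type]
      have := shifted_sum q off (v + p) hoff t
      rw [← this, ← Fin.sum_univ_eq_sum_range
        (fun e => (if off ≤ e then q.coeff (e - off) else 0) * t ^ e) (v + p)]
      rw [Fin.sum_univ_add (f := fun e : Fin (v + p) =>
        (if off ≤ (e : ℕ) then q.coeff ((e : ℕ) - off) else 0) * t ^ (e : ℕ))]
      simp [expc]
      congr 1 <;> refine Finset.sum_congr rfl fun x _ => ?_ <;> split_ifs <;> simp_all <;> left <;> exact if_neg (by omega)
    rcases r with i | j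
    · have := key f i (by have := i.2; omega)
      simpa [Matrix.mulVec, dotProduct, syl, h1] using this
    · have := key g j (by have := j.2; omega)
      simpa [Matrix.mulVec, dotProduct, syl, h2] using this

/-! ### The generic resultant polynomial -/

abbrev ιx (p : ℕ) : Type := (Fin p × Fin p) ⊕ (Fin p × Fin p)

noncomputable def AA (p : ℕ) : Matrix (Fin p) (Fin p) (MvPolynomial (ιx p) ℝ) :=
  Matrix.of fun i j => MvPolynomial.X (Sum.inl (i, j))

noncomputable def BB (p : ℕ) : Matrix (Fin p) (Fin p) (MvPolynomial (ιx p) ℝ) :=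
  Matrix.of fun i j => MvPolynomial.X (Sum.inr (i, j))

noncomputable def genF (p v : ℕ) (hv : v ≤ p) : MvPolynomial (ιx p) ℝ :=
  (syl p v (qdet p (AA p) (BB p - AA p))
    (qdet v ((AA p).submatrix (Fin.castLE hv) (Fin.castLE hv))
      ((BB p - AA p).submatrix (Fin.castLE hv) (Fin.castLE hv)))).det

noncomputable def genFd (p v : ℕ) : MvPolynomial (ιx p) ℝ :=
  if h : v ≤ p then genF p v h else 0

theorem eval_genF (p v : ℕ) (hv : v ≤ p) (x : ιx p → ℝ) :
    MvPolynomial.eval x (genF p v hv) =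
      (syl p v
        (qdet p (Matrix.of fun i j => x (Sum.inl (i, j)))
          ((Matrix.of fun i j => x (Sum.inr (i, j))) - Matrix.of fun i j => x (Sum.inl (i, j))))
        (qdet v
          ((Matrix.of fun i j => x (Sum.inl (i, j))).submatrix (Fin.castLE hv) (Fin.castLE hv))
          (((Matrix.of fun i j => x (Sum.inr (i, j))) -
              Matrix.of fun i j => x (Sum.inl (i, j))).submatrix
            (Fin.castLE hv) (Fin.castLE hv)))).det := by
  rw [genF, RingHom.map_det, RingHom.mapMatrix_apply, syl_map, qdet_map, qdet_map]
  have hA : (AA p).map (MvPolynomial.eval x) = Matrix.of fun i j => x (Sum.inl (i, j)) := by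
    ext i j; simp [AA, Matrix.map_apply]
  have hB : (BB p - AA p).map (MvPolynomial.eval x) =
      (Matrix.of fun i j => x (Sum.inr (i, j))) - Matrix.of fun i j => x (Sum.inl (i, j)) := by
    ext i j; simp [AA, BB, Matrix.map_apply, Matrix.sub_apply]
  have hsub : ∀ (M : Matrix (Fin p) (Fin p) (MvPolynomial (ιx p) ℝ)),
      (M.submatrix (Fin.castLE hv) (Fin.castLE hv)).map (MvPolynomial.eval x)
        = (M.map (MvPolynomial.eval x)).submatrix (Fin.castLE hv) (Fin.castLE hv) := by
    intro M; rfl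
  rw [hsub, hsub, hA, hB]

/-! ### Nonvanishing of the generic resultant: the witness -/

section Witness

variable (m : ℕ)

noncomputable def A0 : Matrix (Fin (m + 2)) (Fin (m + 2)) ℝ :=
  (finRotate (m + 2)).permMatrix ℝ

theorem A0_apply (i j : Fin (m + 2)) :
    A0 m i j = if j = i + 1 then 1 else 0 := by
  simp [A0, Equiv.Perm.permMatrix, PEquiv.toMatrix, Equiv.toPEquiv, finRotate_succ_apply, eq_comm]

theorem det_A0_ne_zero : (A0 m).det ≠ 0 := by
  rw [A0, Matrix.det_permutation]
  simp

theorem g0_eq (v : ℕ) (hv : v ≤ m + 2) (hv1 : v ≤ m + 1) :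
    qdet v ((A0 m).submatrix (Fin.castLE hv) (Fin.castLE hv)) 1 = X ^ v := by
  rw [qdet]
  set M := (X : ℝ[X]) • ((1 : Matrix (Fin v) (Fin v) ℝ).map C)
      + ((A0 m).submatrix (Fin.castLE hv) (Fin.castLE hv)).map C with hM
  have hval : ∀ i : Fin v, ((Fin.castLE hv i) + 1 : Fin (m + 2)).val = (i : ℕ) + 1 := by
    intro i
    apply Fin.val_add_one_of_lt
    have := i.2
    simp only [Fin.lt_iff_val_lt_val, Fin.coe_castLE, Fin.val_last]
    omega
  have hA : ∀ i j : Fin v, (j : ℕ) ≤ (i : ℕ) →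
      (A0 m).submatrix (Fin.castLE hv) (Fin.castLE hv) i j = 0 := by
    intro i j hij
    rw [Matrix.submatrix_apply, A0_apply, if_neg]
    intro hcon
    have := congrArg Fin.val hcon
    rw [hval i] at this
    simp only [Fin.coe_castLE] at this
    omega
  have htri : M.BlockTriangular id := by
    intro i j hij
    simp only [id] at hij
    rw [hM]
    simp only [Matrix.add_apply, Matrix.smul_apply, Matrix.map_apply, smul_eq_mul]
    rw [Matrix.one_apply_ne (ne_of_gt hij), hA i j (le_of_lt (by exact_mod_cast hij))]
    simp
  rw [Matrix.det_of_upperTriangular htri]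
  have hdiag : ∀ i : Fin v, M i i = X := by
    intro i
    rw [hM]
    simp only [Matrix.add_apply, Matrix.smul_apply, Matrix.map_apply, smul_eq_mul,
      Matrix.one_apply_eq]
    rw [hA i i le_rfl]
    simp
  simp [hdiag]

theorem coeff_zero_f0 : (qdet (m + 2) (A0 m) 1).coeff 0 = (A0 m).det := by
  rw [Polynomial.coeff_zero_eq_eval_zero, eval_qdet]
  congr 1
  ext i j
  simp

theorem det_syl_Xpow (p v : ℕ) (f : ℝ[X]) :
    (syl p v f ((X : ℝ[X]) ^ v)).det = (f.coeff 0) ^ v := by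
  have hblocks : syl p v f ((X : ℝ[X]) ^ v) = Matrix.fromBlocks
      (Matrix.of fun i i' : Fin v => if (i : ℕ) ≤ (i' : ℕ) then f.coeff ((i' : ℕ) - i) else 0)
      (Matrix.of fun (i : Fin v) (j' : Fin p) =>
        if (i : ℕ) ≤ v + (j' : ℕ) then f.coeff (v + (j' : ℕ) - i) else 0)
      0 1 := by
    ext r c
    rcases r with i | j <;> rcases c with i' | j'
    · rfl
    · rfl
    · simp only [syl, expc, Sum.elim_inl, Sum.elim_inr, Matrix.fromBlocks_apply₂₁,
        Matrix.zero_apply, Polynomial.coeff_X_pow]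
      have hne : (i' : ℕ) - (j : ℕ) ≠ v := by have := i'.2; omega
      split <;> simp [hne]
    · simp only [syl, expc, Sum.elim_inr, Matrix.fromBlocks_apply₂₂,
        Polynomial.coeff_X_pow]
      rw [Matrix.one_apply]
      by_cases h : j = j'
      · subst h
        rw [if_pos (by omega), if_pos rfl, if_pos (by omega)]
      · have hval : (j : ℕ) ≠ (j' : ℕ) := fun hc => h (Fin.ext hc)
        rw [if_neg h]
        split
        · rw [if_neg (by omega)]
        · rfl
  rw [hblocks, Matrix.det_fromBlocks_zero₂₁, Matrix.det_one, mul_one]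
  have htri : (Matrix.of fun i i' : Fin v =>
      if (i : ℕ) ≤ (i' : ℕ) then f.coeff ((i' : ℕ) - i) else 0).BlockTriangular id := by
    intro i j hij
    simp only [id] at hij
    rw [Matrix.of_apply, if_neg (by exact_mod_cast not_le_of_gt hij)]
  rw [Matrix.det_of_upperTriangular htri]
  have hdiag : ∀ i : Fin v, (Matrix.of fun i i' : Fin v =>
      if (i : ℕ) ≤ (i' : ℕ) then f.coeff ((i' : ℕ) - i) else 0) i i = f.coeff 0 := by
    intro i
    rw [Matrix.of_apply, if_pos le_rfl, Nat.sub_self]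
  simp [hdiag]

theorem genF_ne_zero (v : ℕ) (hv1 : 1 ≤ v) (hvm : v ≤ m + 1) (hv : v ≤ m + 2) :
    genF (m + 2) v hv ≠ 0 := by
  intro hcon
  set x₀ : ιx (m + 2) → ℝ := Sum.elim (fun ij => A0 m ij.1 ij.2)
      (fun ij => A0 m ij.1 ij.2 + (1 : Matrix (Fin (m + 2)) (Fin (m + 2)) ℝ) ij.1 ij.2) with hx
  have h0 := congrArg (MvPolynomial.eval x₀) hcon
  rw [eval_genF, map_zero] at h0
  have hA : (Matrix.of fun i j => x₀ (Sum.inl (i, j))) = A0 m := by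
    ext i j; simp [hx]
  rw [hA] at h0
  have hB2 : (Matrix.of fun i j => x₀ (Sum.inr (i, j))) - A0 m = 1 := by
    ext i j; simp [hx, Matrix.sub_apply]
  rw [hB2] at h0
  have hone : (1 : Matrix (Fin (m + 2)) (Fin (m + 2)) ℝ).submatrix
      (Fin.castLE hv) (Fin.castLE hv) = 1 := by
    ext i j
    simp only [Matrix.submatrix_apply, Matrix.one_apply, Fin.castLE_inj]
  rw [hone, g0_eq m v hv hvm, det_syl_Xpow, coeff_zero_f0] at h0
  exact pow_ne_zero v (det_A0_ne_zero m) h0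

end Witness


/-! ### Measure theory: zero sets of nonzero polynomials are null -/

section MeasureLemmas

open Set

theorem measurePreserving_curry (σ τ : Type*) [Fintype σ] [Fintype τ] :
    MeasurePreserving (fun (f : σ × τ → ℝ) => fun i j => f (i, j)) volume volume := by
  have hmeas : Measurable (fun (f : σ × τ → ℝ) => fun (i : σ) (j : τ) => f (i, j)) :=
    measurable_pi_lambda _ fun i => measurable_pi_lambda _ fun j => measurable_pi_apply _
  refine ⟨hmeas, ?_⟩
  have hvol : (volume : Measure (σ → τ → ℝ)) = Measure.pi fun _ => volume :=
    volume_pi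
  rw [hvol]
  refine (Measure.pi_eq_generateFrom
    (C := fun _ => Set.pi univ '' Set.pi univ fun _ : τ => {s : Set ℝ | MeasurableSet s})
    (fun _ => generateFrom_pi) (fun _ => isPiSystem_pi)
    (fun _ => ?_) ?_).symm
  · rw [volume_pi]
    exact Measure.FiniteSpanningSetsIn.pi fun _ => (volume : Measure ℝ).toFiniteSpanningSetsIn
  · intro s hs
    choose t ht hteq using hs
    have htm : ∀ i j, MeasurableSet (t i j) := fun i j => ht i j (mem_univ j)
    have hpre : (fun (f : σ × τ → ℝ) => fun i j => f (i, j)) ⁻¹' (univ.pi s)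
        = univ.pi (fun q : σ × τ => t q.1 q.2) := by
      ext f
      simp only [mem_preimage, mem_pi, mem_univ, forall_true_left, true_implies]
      constructor
      · intro h q
        have := h q.1
        rw [← hteq q.1] at this
        simp only [mem_pi, mem_univ, true_implies] at this
        exact this q.2
      · intro h i
        rw [← hteq i]
        simp only [mem_pi, mem_univ, true_implies]
        exact fun j => h (i, j)
    rw [Measure.map_apply hmeas (MeasurableSet.univ_pi fun i => by
      rw [← hteq i]; exact MeasurableSet.univ_pi fun j => htm i j)]
    rw [hpre, volume_pi, Measure.pi_pi, Fintype.prod_prod_type]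
    refine Finset.prod_congr rfl fun i _ => ?_
    rw [← hteq i, volume_pi, Measure.pi_pi]

theorem mvpoly_null : ∀ (n : ℕ) (P : MvPolynomial (Fin n) ℝ), P ≠ 0 →
    volume {x : Fin n → ℝ | MvPolynomial.eval x P = 0} = 0 := by
  intro n
  induction n with
  | zero =>
    intro P hP
    obtain ⟨c, rfl⟩ := MvPolynomial.C_surjective (Fin 0) P
    have hc : c ≠ 0 := fun h => hP (by rw [h, map_zero])
    have hset : {x : Fin 0 → ℝ | MvPolynomial.eval x (MvPolynomial.C c) = 0} = ∅ := by
      ext x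
      simp [hc]
    rw [hset]
    exact measure_empty
  | succ n ih =>
    intro P hP
    set Q := MvPolynomial.finSuccEquiv ℝ n P with hQdef
    have hQ0 : Q ≠ 0 := by
      intro h
      exact hP ((map_eq_zero_iff _ (MvPolynomial.finSuccEquiv ℝ n).injective).mp h)
    set c := Q.leadingCoeff with hcdef
    have hc0 : c ≠ 0 := Polynomial.leadingCoeff_ne_zero.mpr hQ0
    -- continuity of the two relevant functions
    have contc : Continuous fun y : Fin n → ℝ => MvPolynomial.eval y c :=
      MvPolynomial.continuous_eval c
    have evalsum : ∀ (y : Fin n → ℝ) (u : ℝ),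
        Polynomial.eval u (Q.map (MvPolynomial.eval y)) =
          ∑ i ∈ Finset.range (Q.natDegree + 1), MvPolynomial.eval y (Q.coeff i) * u ^ i := by
      intro y u
      rw [Polynomial.eval_eq_sum_range' (n := Q.natDegree + 1)
        (lt_of_le_of_lt Polynomial.natDegree_map_le (Nat.lt_succ_self _))]
      simp [Polynomial.coeff_map]
    have contF : Continuous fun yt : (Fin n → ℝ) × ℝ =>
        Polynomial.eval yt.2 (Q.map (MvPolynomial.eval yt.1)) := by
      have h2 : Continuous fun yt : (Fin n → ℝ) × ℝ =>
          ∑ i ∈ Finset.range (Q.natDegree + 1),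
            MvPolynomial.eval yt.1 (Q.coeff i) * yt.2 ^ i :=
        continuous_finset_sum _ fun i _ =>
          (((MvPolynomial.continuous_eval (Q.coeff i)).comp continuous_fst).mul
            (continuous_snd.pow i))
      exact h2.congr fun yt => (evalsum yt.1 yt.2).symm
    -- the set over (Fin n → ℝ) × ℝ with good leading coefficient
    set Z2 : Set ((Fin n → ℝ) × ℝ) := {yt | MvPolynomial.eval yt.1 c ≠ 0 ∧
      Polynomial.eval yt.2 (Q.map (MvPolynomial.eval yt.1)) = 0} with hZ2def
    have hZ2m : MeasurableSet Z2 := by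
      have h1 : MeasurableSet {yt : (Fin n → ℝ) × ℝ | MvPolynomial.eval yt.1 c ≠ 0} := by
        have : {yt : (Fin n → ℝ) × ℝ | MvPolynomial.eval yt.1 c ≠ 0}
            = ((fun yt : (Fin n → ℝ) × ℝ => MvPolynomial.eval yt.1 c) ⁻¹' {0})ᶜ := by
          ext yt; simp
        rw [this]
        exact (((contc.comp continuous_fst).measurable) (measurableSet_singleton 0)).compl
      have h2 : MeasurableSet {yt : (Fin n → ℝ) × ℝ |
          Polynomial.eval yt.2 (Q.map (MvPolynomial.eval yt.1)) = 0} :=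
        contF.measurable (measurableSet_singleton 0)
      exact h1.inter h2
    have hZ2null : (volume.prod volume) Z2 = 0 := by
      rw [Measure.measure_prod_null hZ2m]
      refine Filter.Eventually.of_forall fun y => ?_
      show volume (Prod.mk y ⁻¹' Z2) = 0
      by_cases hy : MvPolynomial.eval y c = 0
      · have hempty : Prod.mk y ⁻¹' Z2 = ∅ := by
          ext u
          simp only [hZ2def, mem_preimage, mem_setOf_eq, mem_empty_iff_false, iff_false, not_and]
          exact fun h => absurd hy h
        rw [hempty]
        simp
      · have hmap0 : Q.map (MvPolynomial.eval y) ≠ 0 := by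
          intro h
          apply hy
          have h3 := congrArg (fun q => Polynomial.coeff q Q.natDegree) h
          have h2 : MvPolynomial.eval y (Q.coeff Q.natDegree) = 0 := by
            simpa [Polynomial.coeff_map] using h3
          rw [hcdef, Polynomial.leadingCoeff]
          exact h2
        have hfin : {u : ℝ | (Q.map (MvPolynomial.eval y)).IsRoot u}.Finite :=
          Polynomial.finite_setOf_isRoot hmap0
        refine measure_mono_null ?_ (hfin.measure_zero volume)
        intro u hu
        exact hu.2
    -- the set over ℝ × (Fin n → ℝ)
    have hswapm : MeasurableSet (Prod.swap ⁻¹' Z2 : Set (ℝ × (Fin n → ℝ))) :=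
      measurable_swap hZ2m
    have hswapnull : (volume.prod volume) (Prod.swap ⁻¹' Z2 : Set (ℝ × (Fin n → ℝ))) = 0 := by
      have h1 : (volume.prod volume) (Prod.swap ⁻¹' Z2 : Set (ℝ × (Fin n → ℝ)))
          = Measure.map Prod.swap (volume.prod volume) Z2 :=
        (Measure.map_apply measurable_swap hZ2m).symm
      rw [Measure.prod_swap] at h1
      rw [h1, hZ2null]
    have hZ1null : (volume.prod volume)
        ((univ : Set ℝ) ×ˢ {y : Fin n → ℝ | MvPolynomial.eval y c = 0}) = 0 := by
      rw [Measure.prod_prod, ih c hc0, mul_zero]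
    have hmain : (volume.prod volume) {ty : ℝ × (Fin n → ℝ) |
        Polynomial.eval ty.1 (Q.map (MvPolynomial.eval ty.2)) = 0} = 0 := by
      refine measure_mono_null ?_
        (measure_union_null hZ1null hswapnull)
      intro ty hty
      by_cases hy : MvPolynomial.eval ty.2 c = 0
      · exact Or.inl ⟨mem_univ _, hy⟩
      · exact Or.inr ⟨hy, hty⟩
    -- transport along the measurable equivalence
    set e := MeasurableEquiv.piFinSuccAbove (fun _ : Fin (n + 1) => ℝ) 0 with hedef
    have hmp : MeasurePreserving e volume volume :=
      volume_preserving_piFinSuccAbove (fun _ : Fin (n + 1) => ℝ) 0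
    have hset : {x : Fin (n + 1) → ℝ | MvPolynomial.eval x P = 0}
        = e ⁻¹' {ty : ℝ × (Fin n → ℝ) |
            Polynomial.eval ty.1 (Q.map (MvPolynomial.eval ty.2)) = 0} := by
      ext x
      have hx : MvPolynomial.eval x P
          = Polynomial.eval (x 0) (Q.map (MvPolynomial.eval (Fin.tail x))) := by
        conv_lhs => rw [← Fin.cons_self_tail x]
        exact MvPolynomial.eval_eq_eval_mv_eval' (Fin.tail x) (x 0) P
      simp only [mem_preimage, mem_setOf_eq, hx, hedef,
        MeasurableEquiv.piFinSuccAbove_apply]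
      rfl
    rw [hset]
    have hmeasset : MeasurableSet {ty : ℝ × (Fin n → ℝ) |
        Polynomial.eval ty.1 (Q.map (MvPolynomial.eval ty.2)) = 0} := by
      have contG : Continuous fun ty : ℝ × (Fin n → ℝ) =>
          Polynomial.eval ty.1 (Q.map (MvPolynomial.eval ty.2)) := by
        have h2 : Continuous fun ty : ℝ × (Fin n → ℝ) =>
            ∑ i ∈ Finset.range (Q.natDegree + 1),
              MvPolynomial.eval ty.2 (Q.coeff i) * ty.1 ^ i :=
          continuous_finset_sum _ fun i _ =>
            (((MvPolynomial.continuous_eval (Q.coeff i)).comp continuous_snd).mul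
              (continuous_fst.pow i))
        exact h2.congr fun ty => (evalsum ty.2 ty.1).symm
      exact contG.measurable (measurableSet_singleton 0)
    rw [hmp.measure_preimage hmeasset.nullMeasurableSet]
    exact hmain

theorem mvpoly_null_gen {ι : Type} [Fintype ι]
    (P : MvPolynomial ι ℝ) (hP : P ≠ 0) :
    volume {y : ι → ℝ | MvPolynomial.eval y P = 0} = 0 := by
  classical
  set n := Fintype.card ι with hn
  set e := Fintype.equivFin ι with he
  have hmp : MeasurePreserving (MeasurableEquiv.arrowCongr' e.symm (MeasurableEquiv.refl ℝ))
      volume volume :=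
    volume_preserving_arrowCongr' e.symm (MeasurableEquiv.refl ℝ)
      ⟨measurable_id, Measure.map_id⟩
  have hT : ∀ x : Fin n → ℝ,
      (MeasurableEquiv.arrowCongr' e.symm (MeasurableEquiv.refl ℝ)) x = x ∘ e := by
    intro x; rfl
  have hmeas : MeasurableSet {y : ι → ℝ | MvPolynomial.eval y P = 0} := by
    have : {y : ι → ℝ | MvPolynomial.eval y P = 0}
        = (fun y : ι → ℝ => MvPolynomial.eval y P) ⁻¹' {0} := by
      ext y; simp
    rw [this]
    exact (MvPolynomial.continuous_eval P).measurable (measurableSet_singleton 0)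
  have hPm : MvPolynomial.rename (⇑e) P ≠ 0 := by
    intro h
    exact hP (MvPolynomial.rename_injective (⇑e) e.injective (by rw [h, map_zero]))
  rw [← hmp.measure_preimage hmeas.nullMeasurableSet]
  have hpre : (MeasurableEquiv.arrowCongr' e.symm (MeasurableEquiv.refl ℝ))
      ⁻¹' {y : ι → ℝ | MvPolynomial.eval y P = 0}
        = {x : Fin n → ℝ | MvPolynomial.eval x (MvPolynomial.rename (⇑e) P) = 0} := by
    ext x
    simp only [Set.mem_preimage, Set.mem_setOf_eq, hT, MvPolynomial.eval_rename]
    exact Iff.rfl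
  rw [hpre]
  exact mvpoly_null n _ hPm

theorem null_on_X (p : ℕ) (P : MvPolynomial (ιx p) ℝ) (hP : P ≠ 0) :
    volume {AB : (Fin p → Fin p → ℝ) × (Fin p → Fin p → ℝ) |
      MvPolynomial.eval
        (fun s => Sum.elim (fun ij : Fin p × Fin p => AB.1 ij.1 ij.2)
          (fun ij : Fin p × Fin p => AB.2 ij.1 ij.2) s) P = 0} = 0 := by
  have hT1 : MeasurePreserving (MeasurableEquiv.sumPiEquivProdPi (fun _ : ιx p => ℝ))
      volume volume :=
    volume_measurePreserving_sumPiEquivProdPi _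
  have hcur := measurePreserving_curry (Fin p) (Fin p)
  have hT2 : MeasurePreserving
      (Prod.map (fun (f : Fin p × Fin p → ℝ) => fun i j => f (i, j))
        (fun (f : Fin p × Fin p → ℝ) => fun i j => f (i, j))) volume volume := by
    rw [show (volume : Measure ((Fin p × Fin p → ℝ) × (Fin p × Fin p → ℝ)))
        = (volume : Measure (Fin p × Fin p → ℝ)).prod volume from rfl,
      show (volume : Measure ((Fin p → Fin p → ℝ) × (Fin p → Fin p → ℝ)))
        = (volume : Measure (Fin p → Fin p → ℝ)).prod volume from rfl]
    exact hcur.prod hcur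
  have hT : MeasurePreserving (fun x : ιx p → ℝ =>
      ((fun i j => x (Sum.inl (i, j)) : Fin p → Fin p → ℝ),
       (fun i j => x (Sum.inr (i, j)) : Fin p → Fin p → ℝ))) volume volume :=
    hT2.comp hT1
  have hmeasset : MeasurableSet {AB : (Fin p → Fin p → ℝ) × (Fin p → Fin p → ℝ) |
      MvPolynomial.eval
        (fun s => Sum.elim (fun ij : Fin p × Fin p => AB.1 ij.1 ij.2)
          (fun ij : Fin p × Fin p => AB.2 ij.1 ij.2) s) P = 0} := by
    have contpt : Continuous (fun AB : (Fin p → Fin p → ℝ) × (Fin p → Fin p → ℝ) =>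
        (fun s : ιx p => Sum.elim (fun ij : Fin p × Fin p => AB.1 ij.1 ij.2)
          (fun ij : Fin p × Fin p => AB.2 ij.1 ij.2) s)) := by
      apply continuous_pi
      intro s
      rcases s with ij | ij
      · exact (continuous_apply ij.2).comp ((continuous_apply ij.1).comp continuous_fst)
      · exact (continuous_apply ij.2).comp ((continuous_apply ij.1).comp continuous_snd)
    have : {AB : (Fin p → Fin p → ℝ) × (Fin p → Fin p → ℝ) |
        MvPolynomial.eval
          (fun s => Sum.elim (fun ij : Fin p × Fin p => AB.1 ij.1 ij.2)
            (fun ij : Fin p × Fin p => AB.2 ij.1 ij.2) s) P = 0}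
        = (fun AB : (Fin p → Fin p → ℝ) × (Fin p → Fin p → ℝ) =>
            MvPolynomial.eval
              (fun s => Sum.elim (fun ij : Fin p × Fin p => AB.1 ij.1 ij.2)
                (fun ij : Fin p × Fin p => AB.2 ij.1 ij.2) s) P) ⁻¹' {0} := by
      ext AB; simp
    rw [this]
    exact ((MvPolynomial.continuous_eval P).comp contpt).measurable (measurableSet_singleton 0)
  rw [← hT.measure_preimage hmeasset.nullMeasurableSet]
  have hpre : (fun x : ιx p → ℝ =>
      ((fun i j => x (Sum.inl (i, j)) : Fin p → Fin p → ℝ),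
       (fun i j => x (Sum.inr (i, j)) : Fin p → Fin p → ℝ)))
      ⁻¹' {AB : (Fin p → Fin p → ℝ) × (Fin p → Fin p → ℝ) |
        MvPolynomial.eval
          (fun s => Sum.elim (fun ij : Fin p × Fin p => AB.1 ij.1 ij.2)
            (fun ij : Fin p × Fin p => AB.2 ij.1 ij.2) s) P = 0}
      = {x : ιx p → ℝ | MvPolynomial.eval x P = 0} := by
    ext x
    simp only [Set.mem_preimage, Set.mem_setOf_eq]
    have hxeq : (fun s : ιx p => Sum.elim
        (fun ij : Fin p × Fin p => x (Sum.inl (ij.1, ij.2)))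
        (fun ij : Fin p × Fin p => x (Sum.inr (ij.1, ij.2))) s) = x := by
      funext s
      rcases s with ij | ij <;> simp
    rw [hxeq]
  rw [hpre]
  exact mvpoly_null_gen P hP

end MeasureLemmas


theorem eval_f_eq (p : ℕ) (A B : Fin p → Fin p → ℝ) (l : ℝ) :
    (qdet p (Matrix.of A) (Matrix.of B - Matrix.of A)).eval l
      = (Matrix.of A - l • (Matrix.of A - Matrix.of B)).det := by
  rw [eval_qdet]
  congr 1
  ext i j
  simp only [Matrix.of_apply, Matrix.sub_apply, Matrix.smul_apply, smul_eq_mul]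
  ring

theorem eval_g_eq (p v : ℕ) (hv : v ≤ p) (A B : Fin p → Fin p → ℝ) (l : ℝ) :
    (qdet v ((Matrix.of A).submatrix (Fin.castLE hv) (Fin.castLE hv))
      ((Matrix.of B - Matrix.of A).submatrix (Fin.castLE hv) (Fin.castLE hv))).eval l
      = ((Matrix.of A - l • (Matrix.of A - Matrix.of B)).submatrix
          (Fin.castLE hv) (Fin.castLE hv)).det := by
  rw [eval_qdet]
  congr 1
  ext i j
  simp only [Matrix.of_apply, Matrix.sub_apply, Matrix.smul_apply, Matrix.submatrix_apply,
    smul_eq_mul]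
  ring

end Stmt8

open Stmt8 in
theorem stmt8 (p : ℕ) (hp : 2 ≤ p) :
    ∀ᵐ AB : (Fin p → Fin p → ℝ) × (Fin p → Fin p → ℝ),
      ∀ l : ℝ, det (of AB.1 - l • (of AB.1 - of AB.2)) = 0 →
        ∀ v : ℕ, 1 ≤ v → ∀ hv : v ≤ p - 1,
          det ((of AB.1 - l • (of AB.1 - of AB.2)).submatrix
            (Fin.castLE (hv.trans (Nat.sub_le p 1)))
            (Fin.castLE (hv.trans (Nat.sub_le p 1)))) ≠ 0 := by
  obtain ⟨m, rfl⟩ : ∃ m, p = m + 2 := ⟨p - 2, by omega⟩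
  have key : ∀ v : ℕ, ∀ᵐ AB : (Fin (m + 2) → Fin (m + 2) → ℝ) × (Fin (m + 2) → Fin (m + 2) → ℝ),
      ¬(1 ≤ v ∧ v ≤ m + 1 ∧ MvPolynomial.eval
        (fun s => Sum.elim (fun ij : Fin (m + 2) × Fin (m + 2) => AB.1 ij.1 ij.2)
          (fun ij : Fin (m + 2) × Fin (m + 2) => AB.2 ij.1 ij.2) s) (genFd (m + 2) v) = 0) := by
    intro v
    by_cases hv : 1 ≤ v ∧ v ≤ m + 1
    · have hne : genFd (m + 2) v ≠ 0 := by
        rw [genFd, dif_pos (by omega : v ≤ m + 2)]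
        exact genF_ne_zero m v hv.1 hv.2 _
      have hnull := null_on_X (m + 2) (genFd (m + 2) v) hne
      have h2 := measure_eq_zero_iff_ae_notMem.mp hnull
      filter_upwards [h2] with AB hAB
      intro hcon
      exact hAB hcon.2.2
    · filter_upwards with AB hcon
      exact hv ⟨hcon.1, hcon.2.1⟩
  filter_upwards [ae_all_iff.mpr key] with AB hAB
  intro l hdet v hv1 hv hminor
  have hvp : v ≤ m + 2 := by omega
  have hvm : v ≤ m + 1 := by omega
  apply hAB v
  refine ⟨hv1, hvm, ?_⟩
  rw [genFd, dif_pos hvp, eval_genF]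
  show (syl (m + 2) v
      (qdet (m + 2) (Matrix.of AB.1) (Matrix.of AB.2 - Matrix.of AB.1))
      (qdet v ((Matrix.of AB.1).submatrix (Fin.castLE hvp) (Fin.castLE hvp))
        ((Matrix.of AB.2 - Matrix.of AB.1).submatrix (Fin.castLE hvp) (Fin.castLE hvp)))).det = 0
  refine det_syl_eq_zero hv1 (natDegree_qdet_le _ _ _) (natDegree_qdet_le _ _ _)
    (t := l) ?_ ?_
  · rw [eval_f_eq]
    exact hdet
  · rw [eval_g_eq]
    exact hminor
end

section
/- For 1 ≤ i ≤ k let G_i be symmetric positive definite real p×p matrices, z_i ∈ ℝ^p, c_i ∈ ℝ, and define the quadratic functions q_i(β) = βᵀG_iβ − 2⟨z_i, β⟩ + c_i and f(β) = max_i q_i(β); let β* denote the unique global minimizer of f. Suppose for each n and each i we are given G_i(n) symmetric positive definite with G_i(n) → G_i entrywise, z_i(n) → z_i, c_i(n) → c_i, and define f_n(β) = max_i (βᵀG_i(n)β − 2⟨z_i(n), β⟩ + c_i(n)). Then each f_n attains a global minimum, and any sequence β_n of global minimizers of f_n converges to β* as n → ∞. -/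
open Finset Filter Matrix


private noncomputable def fmax {p k : ℕ} (A : Fin (k+1) → Matrix (Fin p) (Fin p) ℝ)
    (w : Fin (k+1) → Fin p → ℝ) (d : Fin (k+1) → ℝ) (β : Fin p → ℝ) : ℝ :=
  Finset.univ.sup' Finset.univ_nonempty fun i => β ⬝ᵥ (A i *ᵥ β) - 2 * (w i ⬝ᵥ β) + d i

private lemma quad_continuous {p : ℕ} (A : Matrix (Fin p) (Fin p) ℝ) (z : Fin p → ℝ) (c : ℝ) :
    Continuous fun β : Fin p → ℝ => β ⬝ᵥ (A *ᵥ β) - 2 * (z ⬝ᵥ β) + c := by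
  have h : (fun β : Fin p → ℝ => β ⬝ᵥ (A *ᵥ β) - 2 * (z ⬝ᵥ β) + c) =
      fun β => (∑ i, β i * ∑ j, A i j * β j) - 2 * (∑ i, z i * β i) + c := by
    funext β
    simp [dotProduct, Matrix.mulVec]
  rw [h]
  refine Continuous.add (Continuous.sub ?_ ?_) continuous_const
  · exact continuous_finset_sum _ fun i _ =>
      (continuous_apply i).mul (continuous_finset_sum _ fun j _ =>
        continuous_const.mul (continuous_apply j))
  · exact continuous_const.mul (continuous_finset_sum _ fun i _ =>
      continuous_const.mul (continuous_apply i))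

private lemma fmax_continuous {p k : ℕ} (A : Fin (k+1) → Matrix (Fin p) (Fin p) ℝ)
    (w : Fin (k+1) → Fin p → ℝ) (d : Fin (k+1) → ℝ) : Continuous (fmax A w d) :=
  Continuous.finset_sup'_apply _ fun i _ => quad_continuous (A i) (w i) (d i)

private lemma abs_dot_le {p : ℕ} (z x : Fin p → ℝ) :
    |z ⬝ᵥ x| ≤ (∑ i, |z i|) * ‖x‖ := by
  calc |z ⬝ᵥ x| ≤ ∑ i, |z i * x i| := Finset.abs_sum_le_sum_abs _ _
    _ ≤ ∑ i, |z i| * ‖x‖ := by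
        refine Finset.sum_le_sum fun i _ => ?_
        rw [abs_mul]
        exact mul_le_mul_of_nonneg_left ((Real.norm_eq_abs _) ▸ norm_le_pi_norm x i) (abs_nonneg _)
    _ = (∑ i, |z i|) * ‖x‖ := (Finset.sum_mul ..).symm

private lemma abs_dot_mulVec_le {p : ℕ} (A : Matrix (Fin p) (Fin p) ℝ) (x y : Fin p → ℝ) :
    |x ⬝ᵥ (A *ᵥ y)| ≤ (∑ i, ∑ j, |A i j|) * (‖x‖ * ‖y‖) := by
  have hxy : x ⬝ᵥ (A *ᵥ y) = ∑ i, ∑ j, x i * (A i j * y j) := by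
    simp [dotProduct, Matrix.mulVec, Finset.mul_sum]
  rw [hxy, Finset.sum_mul]
  calc |∑ i, ∑ j, x i * (A i j * y j)| ≤ ∑ i, |∑ j, x i * (A i j * y j)| :=
        Finset.abs_sum_le_sum_abs _ _
    _ ≤ ∑ i, ∑ j, |A i j| * (‖x‖ * ‖y‖) := by
        refine Finset.sum_le_sum fun i _ => ?_
        refine (Finset.abs_sum_le_sum_abs _ _).trans (Finset.sum_le_sum fun j _ => ?_)
        have hx : |x i| ≤ ‖x‖ := (Real.norm_eq_abs _) ▸ norm_le_pi_norm x i
        have hy : |y j| ≤ ‖y‖ := (Real.norm_eq_abs _) ▸ norm_le_pi_norm y j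
        calc |x i * (A i j * y j)| = |A i j| * (|x i| * |y j|) := by
              rw [abs_mul, abs_mul]; ring
          _ ≤ |A i j| * (‖x‖ * ‖y‖) := by
              have := mul_le_mul hx hy (abs_nonneg _) (norm_nonneg _)
              exact mul_le_mul_of_nonneg_left this (abs_nonneg _)
    _ = ∑ i, (∑ j, |A i j|) * (‖x‖ * ‖y‖) := by
        refine Finset.sum_congr rfl fun i _ => ?_
        rw [Finset.sum_mul]

private lemma posdef_lower {p : ℕ} {A : Matrix (Fin p) (Fin p) ℝ} (hA : A.PosDef) :
    ∃ μ > 0, ∀ x : Fin p → ℝ, μ * ‖x‖ ^ 2 ≤ x ⬝ᵥ (A *ᵥ x) := by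
  rcases subsingleton_or_nontrivial (Fin p → ℝ) with hsub | hnt
  · refine ⟨1, one_pos, fun x => ?_⟩
    have hx : x = 0 := Subsingleton.elim x 0
    subst hx
    simp
  · have hsph : (Metric.sphere (0 : Fin p → ℝ) 1).Nonempty :=
      NormedSpace.sphere_nonempty.mpr zero_le_one
    have hcont : Continuous fun x : Fin p → ℝ => x ⬝ᵥ (A *ᵥ x) := by
      have := quad_continuous A (0 : Fin p → ℝ) 0
      simpa using this
    obtain ⟨u, hu, humin⟩ :=
      (isCompact_sphere (0 : Fin p → ℝ) 1).exists_isMinOn hsph hcont.continuousOn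
    have hu1 : ‖u‖ = 1 := by simpa using hu
    have hune : u ≠ 0 := by
      intro h; rw [h] at hu1; simp at hu1
    refine ⟨u ⬝ᵥ (A *ᵥ u), (by simpa using hA.dotProduct_mulVec_pos hune), fun x => ?_⟩
    rcases eq_or_ne x 0 with rfl | hx
    · simp
    · have hnx : (0 : ℝ) < ‖x‖ := norm_pos_iff.mpr hx
      set v : Fin p → ℝ := ‖x‖⁻¹ • x with hv
      have hvs : v ∈ Metric.sphere (0 : Fin p → ℝ) 1 := by
        simp [hv, norm_smul, abs_of_pos (inv_pos.mpr hnx), inv_mul_cancel₀ hnx.ne']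
      have hle : u ⬝ᵥ (A *ᵥ u) ≤ v ⬝ᵥ (A *ᵥ v) := humin hvs
      have hxv : x = ‖x‖ • v := by
        rw [hv, smul_smul, mul_inv_cancel₀ hnx.ne', one_smul]
      have hquad : x ⬝ᵥ (A *ᵥ x) = ‖x‖ ^ 2 * (v ⬝ᵥ (A *ᵥ v)) := by
        conv_lhs => rw [hxv]
        rw [Matrix.mulVec_smul, smul_dotProduct, dotProduct_smul,
          smul_eq_mul, smul_eq_mul]
        ring
      rw [hquad]
      nlinarith [sq_nonneg ‖x‖]

private lemma quad_tendsto_atTop {μ : ℝ} (a c : ℝ) (hμ : 0 < μ) :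
    Tendsto (fun t : ℝ => μ * t ^ 2 - a * t + c) atTop atTop := by
  have h1 : Tendsto (fun t : ℝ => t * (μ * t - a) + c) atTop atTop := by
    apply tendsto_atTop_add_const_right
    exact tendsto_id.atTop_mul_atTop₀
      (tendsto_atTop_add_const_right _ _ (tendsto_id.const_mul_atTop hμ))
  refine h1.congr fun t => by ring

private lemma fmax_lower {p k : ℕ} (A : Fin (k+1) → Matrix (Fin p) (Fin p) ℝ)
    (w : Fin (k+1) → Fin p → ℝ) (d : Fin (k+1) → ℝ) {μ : ℝ}
    (hμ : ∀ x : Fin p → ℝ, μ * ‖x‖ ^ 2 ≤ x ⬝ᵥ (A 0 *ᵥ x)) (β : Fin p → ℝ) :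
    μ * ‖β‖ ^ 2 - (2 * ∑ i, |w 0 i|) * ‖β‖ + d 0 ≤ fmax A w d β := by
  have h3 : β ⬝ᵥ (A 0 *ᵥ β) - 2 * (w 0 ⬝ᵥ β) + d 0 ≤ fmax A w d β := by
    rw [fmax]
    exact Finset.le_sup' (fun i => β ⬝ᵥ (A i *ᵥ β) - 2 * (w i ⬝ᵥ β) + d i)
      (Finset.mem_univ (0 : Fin (k+1)))
  have h1 := hμ β
  have h2 := abs_le.mp (abs_dot_le (w 0) β)
  linarith [h2.2]

private lemma fmax_exists_min {p k : ℕ} (A : Fin (k+1) → Matrix (Fin p) (Fin p) ℝ)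
    (hA : ∀ i, (A i).PosDef) (w : Fin (k+1) → Fin p → ℝ) (d : Fin (k+1) → ℝ) :
    ∃ β : Fin p → ℝ, ∀ β' : Fin p → ℝ, fmax A w d β ≤ fmax A w d β' := by
  obtain ⟨μ, hμpos, hμ⟩ := posdef_lower (hA 0)
  have hcoer : Tendsto (fmax A w d) (cocompact (Fin p → ℝ)) atTop := by
    refine tendsto_atTop_mono (fmax_lower A w d hμ) ?_
    exact (quad_tendsto_atTop _ _ hμpos).comp tendsto_norm_cocompact_atTop
  exact (fmax_continuous A w d).exists_forall_le hcoer

private lemma sup'_le_sup'_add {ι : Type*} {s : Finset ι} (hs : s.Nonempty) (a b : ι → ℝ) {M : ℝ}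
    (h : ∀ i ∈ s, a i ≤ b i + M) : s.sup' hs a ≤ s.sup' hs b + M :=
  Finset.sup'_le _ _ fun i hi => (h i hi).trans (add_le_add_left (Finset.le_sup' b hi) M)

private lemma quad_diff_bound {p : ℕ} (A B : Matrix (Fin p) (Fin p) ℝ) (w v : Fin p → ℝ)
    (d e : ℝ) (β : Fin p → ℝ) :
    |(β ⬝ᵥ (A *ᵥ β) - 2 * (w ⬝ᵥ β) + d) - (β ⬝ᵥ (B *ᵥ β) - 2 * (v ⬝ᵥ β) + e)| ≤
      (∑ i, ∑ j, |A i j - B i j|) * ‖β‖ ^ 2 + 2 * (∑ i, |w i - v i|) * ‖β‖ + |d - e| := by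
  have key : (β ⬝ᵥ (A *ᵥ β) - 2 * (w ⬝ᵥ β) + d) - (β ⬝ᵥ (B *ᵥ β) - 2 * (v ⬝ᵥ β) + e)
      = β ⬝ᵥ ((A - B) *ᵥ β) - 2 * ((w - v) ⬝ᵥ β) + (d - e) := by
    rw [Matrix.sub_mulVec, dotProduct_sub, sub_dotProduct]; ring
  rw [key]
  have h1 : |β ⬝ᵥ ((A - B) *ᵥ β)| ≤ (∑ i, ∑ j, |A i j - B i j|) * ‖β‖ ^ 2 := by
    have := abs_dot_mulVec_le (A - B) β β
    simpa [Matrix.sub_apply, sq] using this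
  have h2 : |(w - v) ⬝ᵥ β| ≤ (∑ i, |w i - v i|) * ‖β‖ := by
    have := abs_dot_le (w - v) β
    simpa [Pi.sub_apply] using this
  have ha := abs_le.mp h1
  have hb := abs_le.mp h2
  have hc := le_abs_self (d - e)
  have hc' := neg_abs_le (d - e)
  rw [abs_le]
  constructor <;> linarith [ha.1, ha.2, hb.1, hb.2]

private lemma fmax_sub_le {p k : ℕ} (A B : Fin (k+1) → Matrix (Fin p) (Fin p) ℝ)
    (w v : Fin (k+1) → Fin p → ℝ) (d e : Fin (k+1) → ℝ) {M1 M2 M3 : ℝ}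
    (hM1 : ∀ i, (∑ u, ∑ r, |A i u r - B i u r|) ≤ M1)
    (hM2 : ∀ i, (∑ u, |w i u - v i u|) ≤ M2)
    (hM3 : ∀ i, |d i - e i| ≤ M3) (β : Fin p → ℝ) :
    fmax A w d β ≤ fmax B v e β + (M1 * ‖β‖ ^ 2 + 2 * M2 * ‖β‖ + M3) := by
  rw [fmax, fmax]
  refine sup'_le_sup'_add _ _ _ fun i _ => ?_
  have hq := (abs_le.mp (quad_diff_bound (A i) (B i) (w i) (v i) (d i) (e i) β)).2
  have m1 : (∑ u, ∑ r, |A i u r - B i u r|) * ‖β‖ ^ 2 ≤ M1 * ‖β‖ ^ 2 :=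
    mul_le_mul_of_nonneg_right (hM1 i) (sq_nonneg _)
  have m2 : (∑ u, |w i u - v i u|) * ‖β‖ ≤ M2 * ‖β‖ :=
    mul_le_mul_of_nonneg_right (hM2 i) (norm_nonneg _)
  linarith [hM3 i]

private lemma quad_midpoint {p : ℕ} (A : Matrix (Fin p) (Fin p) ℝ) (z : Fin p → ℝ) (c : ℝ)
    (x y : Fin p → ℝ) :
    ((1/2 : ℝ) • (x + y)) ⬝ᵥ (A *ᵥ ((1/2 : ℝ) • (x + y)))
        - 2 * (z ⬝ᵥ ((1/2 : ℝ) • (x + y))) + c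
      = ((x ⬝ᵥ (A *ᵥ x) - 2 * (z ⬝ᵥ x) + c) + (y ⬝ᵥ (A *ᵥ y) - 2 * (z ⬝ᵥ y) + c)) / 2
        - (1/4) * ((x - y) ⬝ᵥ (A *ᵥ (x - y))) := by
  simp only [Matrix.mulVec_add, Matrix.mulVec_smul, Matrix.mulVec_sub,
    add_dotProduct, dotProduct_add, smul_dotProduct,
    dotProduct_smul, sub_dotProduct, dotProduct_sub, smul_eq_mul]
  ring

/-- For `0 ≤ i ≤ k` let `G i` be symmetric positive definite real
`p × p` matrices, `z i ∈ ℝ^p`, `c i ∈ ℝ`, and define the quadratics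
`q i β = βᵀ (G i) β − 2⟨z i, β⟩ + c i` and `f = max_i q i`, with unique global
minimizer `β*`.  If `Gn n i → G i` (entrywise, each `Gn n i` symmetric positive
definite), `zn n i → z i`, `cn n i → c i`, then each
`f_n = max_i (βᵀ (Gn n i) β − 2⟨zn n i, β⟩ + cn n i)` attains a global minimum, and
any sequence of global minimizers of the `f_n` converges to `β*`. -/
theorem stmt14 (p k : ℕ)
    (G : Fin (k + 1) → Matrix (Fin p) (Fin p) ℝ)
    (z : Fin (k + 1) → Fin p → ℝ) (c : Fin (k + 1) → ℝ)
    (hG : ∀ i, (G i).PosDef)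
    (βstar : Fin p → ℝ)
    (hmin : ∀ β : Fin p → ℝ,
      (univ.sup' univ_nonempty fun i => βstar ⬝ᵥ (G i *ᵥ βstar) - 2 * (z i ⬝ᵥ βstar) + c i) ≤
        (univ.sup' univ_nonempty fun i => β ⬝ᵥ (G i *ᵥ β) - 2 * (z i ⬝ᵥ β) + c i))
    (Gn : ℕ → Fin (k + 1) → Matrix (Fin p) (Fin p) ℝ)
    (zn : ℕ → Fin (k + 1) → Fin p → ℝ) (cn : ℕ → Fin (k + 1) → ℝ)
    (hGn : ∀ n i, (Gn n i).PosDef)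
    (hGconv : ∀ i u v, Tendsto (fun n => Gn n i u v) atTop (nhds (G i u v)))
    (hzconv : ∀ i u, Tendsto (fun n => zn n i u) atTop (nhds (z i u)))
    (hcconv : ∀ i, Tendsto (fun n => cn n i) atTop (nhds (c i))) :
    (∀ n, ∃ β : Fin p → ℝ, ∀ β' : Fin p → ℝ,
      (univ.sup' univ_nonempty fun i => β ⬝ᵥ (Gn n i *ᵥ β) - 2 * (zn n i ⬝ᵥ β) + cn n i) ≤
        (univ.sup' univ_nonempty fun i => β' ⬝ᵥ (Gn n i *ᵥ β') - 2 * (zn n i ⬝ᵥ β') + cn n i)) ∧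
    ∀ βn : ℕ → Fin p → ℝ,
      (∀ n, ∀ β' : Fin p → ℝ,
        (univ.sup' univ_nonempty fun i =>
          βn n ⬝ᵥ (Gn n i *ᵥ βn n) - 2 * (zn n i ⬝ᵥ βn n) + cn n i) ≤
          (univ.sup' univ_nonempty fun i =>
            β' ⬝ᵥ (Gn n i *ᵥ β') - 2 * (zn n i ⬝ᵥ β') + cn n i)) →
      Tendsto βn atTop (nhds βstar) := by
  constructor
  · intro n
    exact fmax_exists_min (Gn n) (hGn n) (zn n) (cn n)
  intro βn hβn'
  have hβn : ∀ n β', fmax (Gn n) (zn n) (cn n) (βn n) ≤ fmax (Gn n) (zn n) (cn n) β' := hβn'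
  have hmin' : ∀ β, fmax G z c βstar ≤ fmax G z c β := hmin
  -- the error quantities
  obtain ⟨dG, hdGt, hdG0, hdGnn⟩ :
      ∃ dG : ℕ → ℝ, Tendsto dG atTop (nhds 0) ∧
        (∀ n i, (∑ u, ∑ r, |Gn n i u r - G i u r|) ≤ dG n) ∧ ∀ n, 0 ≤ dG n := by
    refine ⟨fun n => univ.sup' univ_nonempty fun i => ∑ u, ∑ r, |Gn n i u r - G i u r|,
      ?_, fun n i => Finset.le_sup' (fun i => ∑ u, ∑ r, |Gn n i u r - G i u r|)
        (Finset.mem_univ i), fun n => ?_⟩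
    · have h0 : (univ.sup' univ_nonempty fun _ : Fin (k+1) => (0:ℝ)) = 0 :=
        Finset.sup'_const _ _
      rw [← h0]
      refine Filter.Tendsto.finset_sup'_nhds_apply _ fun i _ => ?_
      have : Tendsto (fun n => ∑ u : Fin p, ∑ r : Fin p, |Gn n i u r - G i u r|) atTop
          (nhds (∑ _u : Fin p, ∑ _r : Fin p, (0:ℝ))) :=
        tendsto_finset_sum _ fun u _ => tendsto_finset_sum _ fun r _ => by
          simpa using ((hGconv i u r).sub_const (G i u r)).abs
      simpa using this
    · exact le_trans (by positivity) (Finset.le_sup' _ (Finset.mem_univ (0 : Fin (k+1))))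
  obtain ⟨dz, hdzt, hdz0, hdznn⟩ :
      ∃ dz : ℕ → ℝ, Tendsto dz atTop (nhds 0) ∧
        (∀ n i, (∑ u, |zn n i u - z i u|) ≤ dz n) ∧ ∀ n, 0 ≤ dz n := by
    refine ⟨fun n => univ.sup' univ_nonempty fun i => ∑ u, |zn n i u - z i u|,
      ?_, fun n i => Finset.le_sup' (fun i => ∑ u, |zn n i u - z i u|)
        (Finset.mem_univ i), fun n => ?_⟩
    · have h0 : (univ.sup' univ_nonempty fun _ : Fin (k+1) => (0:ℝ)) = 0 :=
        Finset.sup'_const _ _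
      rw [← h0]
      refine Filter.Tendsto.finset_sup'_nhds_apply _ fun i _ => ?_
      have : Tendsto (fun n => ∑ u : Fin p, |zn n i u - z i u|) atTop
          (nhds (∑ _u : Fin p, (0:ℝ))) :=
        tendsto_finset_sum _ fun u _ => by
          simpa using ((hzconv i u).sub_const (z i u)).abs
      simpa using this
    · exact le_trans (by positivity) (Finset.le_sup' _ (Finset.mem_univ (0 : Fin (k+1))))
  obtain ⟨dc, hdct, hdc0, hdcnn⟩ :
      ∃ dc : ℕ → ℝ, Tendsto dc atTop (nhds 0) ∧
        (∀ n i, |cn n i - c i| ≤ dc n) ∧ ∀ n, 0 ≤ dc n := by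
    refine ⟨fun n => univ.sup' univ_nonempty fun i => |cn n i - c i|,
      ?_, fun n i => Finset.le_sup' (fun i => |cn n i - c i|)
        (Finset.mem_univ i), fun n => ?_⟩
    · have h0 : (univ.sup' univ_nonempty fun _ : Fin (k+1) => (0:ℝ)) = 0 :=
        Finset.sup'_const _ _
      rw [← h0]
      refine Filter.Tendsto.finset_sup'_nhds_apply _ fun i _ => ?_
      simpa using ((hcconv i).sub_const (c i)).abs
    · exact le_trans (by positivity) (Finset.le_sup' _ (Finset.mem_univ (0 : Fin (k+1))))
  -- flipped forms
  have hdG0' : ∀ n i, (∑ u, ∑ r, |G i u r - Gn n i u r|) ≤ dG n := fun n i => by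
    simpa [abs_sub_comm] using hdG0 n i
  have hdz0' : ∀ n i, (∑ u, |z i u - zn n i u|) ≤ dz n := fun n i => by
    simpa [abs_sub_comm] using hdz0 n i
  have hdc0' : ∀ n i, |c i - cn n i| ≤ dc n := fun n i => by
    simpa [abs_sub_comm] using hdc0 n i
  -- two-sided fmax comparison
  have hcmp1 : ∀ n β, fmax G z c β ≤ fmax (Gn n) (zn n) (cn n) β +
      (dG n * ‖β‖ ^ 2 + 2 * dz n * ‖β‖ + dc n) := fun n β =>
    fmax_sub_le G (Gn n) z (zn n) c (cn n) (hdG0' n) (hdz0' n) (hdc0' n) β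
  have hcmp2 : ∀ n β, fmax (Gn n) (zn n) (cn n) β ≤ fmax G z c β +
      (dG n * ‖β‖ ^ 2 + 2 * dz n * ‖β‖ + dc n) := fun n β =>
    fmax_sub_le (Gn n) G (zn n) z (cn n) c (hdG0 n) (hdz0 n) (hdc0 n) β
  -- convergence of fn at βstar
  have herr : ∀ t : ℝ, Tendsto (fun n => dG n * t ^ 2 + 2 * dz n * t + dc n) atTop (nhds 0) := by
    intro t
    have h := ((hdGt.mul_const (t ^ 2)).add ((hdzt.const_mul 2).mul_const t)).add hdct
    simpa using h
  have hfnstar : Tendsto (fun n => fmax (Gn n) (zn n) (cn n) βstar) atTop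
      (nhds (fmax G z c βstar)) := by
    have hb : ∀ n, ‖fmax (Gn n) (zn n) (cn n) βstar - fmax G z c βstar‖ ≤
        dG n * ‖βstar‖ ^ 2 + 2 * dz n * ‖βstar‖ + dc n := fun n => by
      rw [Real.norm_eq_abs, abs_le]
      exact ⟨by linarith [hcmp1 n βstar], by linarith [hcmp2 n βstar]⟩
    have h0 := squeeze_zero_norm hb (herr ‖βstar‖)
    have h1 := h0.add_const (fmax G z c βstar)
    simpa using h1
  -- eventual upper bound on fn (βn n)
  set B : ℝ := fmax G z c βstar + 1 with hB
  have hevB : ∀ᶠ n in atTop, fmax (Gn n) (zn n) (cn n) (βn n) ≤ B := by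
    filter_upwards [hfnstar.eventually_lt_const (lt_add_one (fmax G z c βstar))] with n hn
    exact (hβn n βstar).trans hn.le
  -- coercivity data
  obtain ⟨μ, hμpos, hμ⟩ := posdef_lower (hG 0)
  set a : ℝ := 2 * ∑ i, |z 0 i| with ha
  obtain ⟨R, hR⟩ := eventually_atTop.mp
    ((quad_tendsto_atTop (a + 2) (c 0 - 1) (half_pos hμpos)).eventually_ge_atTop (B + 1))
  set R' : ℝ := max R ‖βstar‖ with hR'
  have hR'star : ‖βstar‖ ≤ R' := le_max_right _ _
  have hR'nn : 0 ≤ R' := le_trans (norm_nonneg βstar) hR'star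
  have hevbnd : ∀ᶠ n in atTop, ‖βn n‖ ≤ R' := by
    filter_upwards [hdGt.eventually_le_const (half_pos hμpos),
      hdzt.eventually_lt_const one_pos, hdct.eventually_lt_const one_pos, hevB]
      with n h1 h2 h3 hb
    by_contra hgt
    push_neg at hgt
    have hRle : R ≤ ‖βn n‖ := le_trans (le_max_left _ _) hgt.le
    have hphi := hR _ hRle
    have hflow := fmax_lower G z c hμ (βn n)
    have hdiff := hcmp1 n (βn n)
    have hn1 : dG n * ‖βn n‖ ^ 2 ≤ μ / 2 * ‖βn n‖ ^ 2 :=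
      mul_le_mul_of_nonneg_right h1 (sq_nonneg _)
    have hn2 : dz n * ‖βn n‖ ≤ 1 * ‖βn n‖ :=
      mul_le_mul_of_nonneg_right h2.le (norm_nonneg _)
    rw [← ha] at hflow
    linarith
  -- strict minimality of βstar
  have huniq : ∀ β, β ≠ βstar → fmax G z c βstar < fmax G z c β := by
    intro β hne
    by_contra hle
    push_neg at hle
    set m : Fin p → ℝ := (1/2 : ℝ) • (β + βstar) with hm
    obtain ⟨i0, -, hEq⟩ := Finset.exists_mem_eq_sup' univ_nonempty
      (fun i => m ⬝ᵥ (G i *ᵥ m) - 2 * (z i ⬝ᵥ m) + c i)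
    have hfm : fmax G z c m = m ⬝ᵥ (G i0 *ᵥ m) - 2 * (z i0 ⬝ᵥ m) + c i0 := hEq
    have hpos : 0 < (β - βstar) ⬝ᵥ (G i0 *ᵥ (β - βstar)) :=
      by simpa using (hG i0).dotProduct_mulVec_pos (sub_ne_zero.mpr hne)
    have hid := quad_midpoint (G i0) (z i0) (c i0) β βstar
    have h1 : β ⬝ᵥ (G i0 *ᵥ β) - 2 * (z i0 ⬝ᵥ β) + c i0 ≤ fmax G z c β := by
      rw [fmax]
      exact Finset.le_sup' (fun i => β ⬝ᵥ (G i *ᵥ β) - 2 * (z i ⬝ᵥ β) + c i) (Finset.mem_univ i0)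
    have h2 : βstar ⬝ᵥ (G i0 *ᵥ βstar) - 2 * (z i0 ⬝ᵥ βstar) + c i0 ≤ fmax G z c βstar := by
      rw [fmax]
      exact Finset.le_sup' (fun i => βstar ⬝ᵥ (G i *ᵥ βstar) - 2 * (z i ⬝ᵥ βstar) + c i)
        (Finset.mem_univ i0)
    have h3 := hmin' m
    rw [hfm, ← hm] at *
    linarith [hid]
  -- final epsilon argument
  rw [Metric.tendsto_atTop]
  intro ε hε
  set K : Set (Fin p → ℝ) :=
    Metric.closedBall 0 R' ∩ {β | ε ≤ dist β βstar} with hK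
  have hKc : IsCompact K :=
    (isCompact_closedBall _ _).inter_right
      (isClosed_le continuous_const (continuous_id.dist continuous_const))
  rcases Set.eq_empty_or_nonempty K with hKe | hKne
  · obtain ⟨N, hN⟩ := eventually_atTop.mp hevbnd
    refine ⟨N, fun n hn => ?_⟩
    by_contra h'
    push_neg at h'
    have : βn n ∈ K := ⟨mem_closedBall_zero_iff.mpr (hN n hn), h'⟩
    rw [hKe] at this
    exact Set.notMem_empty _ this
  · obtain ⟨β₀, hβ₀K, hmin₀⟩ := hKc.exists_isMinOn hKne (fmax_continuous G z c).continuousOn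
    have hβ₀ne : β₀ ≠ βstar := by
      intro h
      have := hβ₀K.2
      rw [h] at this
      simp only [Set.mem_setOf_eq, dist_self] at this
      linarith
    have hgt : fmax G z c βstar < fmax G z c β₀ := huniq β₀ hβ₀ne
    have hevgood : ∀ᶠ n in atTop, fmax G z c (βn n) < fmax G z c β₀ := by
      filter_upwards [hevbnd,
        (herr R').eventually_lt_const (by linarith :
          (0:ℝ) < (fmax G z c β₀ - fmax G z c βstar) / 2)] with n hb he
      have e1 : dG n * ‖βn n‖ ^ 2 + 2 * dz n * ‖βn n‖ + dc n ≤
          dG n * R' ^ 2 + 2 * dz n * R' + dc n := by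
        have q1 : ‖βn n‖ ^ 2 ≤ R' ^ 2 := pow_le_pow_left₀ (norm_nonneg _) hb 2
        have := mul_le_mul_of_nonneg_left q1 (hdGnn n)
        have := mul_le_mul_of_nonneg_left hb (hdznn n)
        nlinarith [hdznn n, hdGnn n]
      have e2 : dG n * ‖βstar‖ ^ 2 + 2 * dz n * ‖βstar‖ + dc n ≤
          dG n * R' ^ 2 + 2 * dz n * R' + dc n := by
        have q1 : ‖βstar‖ ^ 2 ≤ R' ^ 2 := pow_le_pow_left₀ (norm_nonneg _) hR'star 2
        nlinarith [hdznn n, hdGnn n, mul_le_mul_of_nonneg_left q1 (hdGnn n),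
          mul_le_mul_of_nonneg_left hR'star (hdznn n)]
      have c1 := hcmp1 n (βn n)
      have c2 := hβn n βstar
      have c3 := hcmp2 n βstar
      linarith
    obtain ⟨N, hN⟩ := eventually_atTop.mp (hevbnd.and hevgood)
    refine ⟨N, fun n hn => ?_⟩
    by_contra h'
    push_neg at h'
    have hmem : βn n ∈ K := ⟨mem_closedBall_zero_iff.mpr (hN n hn).1, h'⟩
    have := hmin₀ hmem
    exact absurd (hN n hn).2 (not_lt.mpr this)
end
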